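/- For h ∈ ℝ and ρ > 0, ∫_{−∞}^{h} e^{−h²/2 + x₀²/2 − ρh − ρx₀} Φ(x₀ − ρ) φ(x₀) dx₀ = (φ(h+ρ)/ρ) Φ(h) − (φ(h) e^{−2hρ}/ρ) Φ(h − ρ). -/

import Mathlib

open MeasureTheory Set

/-- Standard normal density. -/
noncomputable def stdGaussPDF (x : ℝ) : ℝ :=
  (Real.sqrt (2 * Real.pi))⁻¹ * Real.exp (-x ^ 2 / 2)

/-- Standard normal c.d.f. `Φ`. -/
noncomputable def stdGaussCDF (t : ℝ) : ℝ := ∫ x in Set.Iic t, stdGaussPDF x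

open Filter

lemma pdf_nonneg (x : ℝ) : 0 ≤ stdGaussPDF x := by
  unfold stdGaussPDF; positivity

lemma pdf_integrable : MeasureTheory.Integrable stdGaussPDF := by
  have : (Integrable fun x : ℝ => Real.exp (-(1/2 : ℝ) * x ^ 2)) :=
    integrable_exp_neg_mul_sq (by norm_num)
  have h2 := this.const_mul (Real.sqrt (2 * Real.pi))⁻¹
  refine h2.congr ?_
  filter_upwards with x
  unfold stdGaussPDF
  ring_nf

lemma pdf_continuous : Continuous stdGaussPDF := by
  unfold stdGaussPDF; fun_prop

lemma integrableOn_exp_mul_Iic' {a t : ℝ} (ha : 0 < a) :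
    IntegrableOn (fun x => Real.exp (a * x)) (Iic t) := by
  have h1 : IntegrableOn Real.exp (Iic (a * t)) := integrableOn_exp_Iic _
  rw [← integrable_indicator_iff measurableSet_Iic] at h1 ⊢
  have h2 := (MeasureTheory.integrable_comp_mul_left_iff
      ((Iic (a * t)).indicator Real.exp) ha.ne').mpr h1
  have heq : (fun x => (Iic (a * t)).indicator Real.exp (a * x))
      = (Iic t).indicator (fun x => Real.exp (a * x)) := by
    funext x
    simp only [Set.indicator_apply, mem_Iic]
    simp [mul_le_mul_iff_right₀ ha]
  exact heq ▸ h2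

lemma integral_exp_mul_Iic' {a t : ℝ} (ha : 0 < a) :
    ∫ x in Iic t, Real.exp (a * x) = Real.exp (a * t) / a := by
  have hder : ∀ x ∈ Iic t, HasDerivAt (fun y => Real.exp (a * y) / a)
      (Real.exp (a * x)) x := by
    intro x _
    have h1 : HasDerivAt (fun y : ℝ => a * y) a x := by
      simpa using (hasDerivAt_id x).const_mul a
    have := (h1.exp).div_const a
    exact this.congr_deriv (mul_div_cancel_right₀ _ ha.ne')
  have htend : Tendsto (fun y => Real.exp (a * y) / a) atBot (nhds 0) := by
    have h1 : Tendsto (fun y : ℝ => a * y) atBot atBot :=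
      (tendsto_id (α := ℝ)).const_mul_atBot ha
    have := (Real.tendsto_exp_atBot.comp h1).div_const a
    simpa using this
  have := integral_Iic_of_hasDerivAt_of_tendsto' hder (integrableOn_exp_mul_Iic' ha) htend
  simpa using this

lemma cdf_nonneg (t : ℝ) : 0 ≤ stdGaussCDF t :=
  setIntegral_nonneg measurableSet_Iic fun x _ => pdf_nonneg x

lemma cdf_le {a : ℝ} (ha : 0 < a) (t : ℝ) :
    stdGaussCDF t ≤ (Real.sqrt (2 * Real.pi))⁻¹ * Real.exp (a ^ 2 / 2)
      * (Real.exp (a * t) / a) := by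
  have hint : IntegrableOn
      (fun x => (Real.sqrt (2 * Real.pi))⁻¹ * Real.exp (a ^ 2 / 2) * Real.exp (a * x))
      (Iic t) := (integrableOn_exp_mul_Iic' ha).const_mul _
  have hmono : stdGaussCDF t ≤ ∫ x in Iic t,
      (Real.sqrt (2 * Real.pi))⁻¹ * Real.exp (a ^ 2 / 2) * Real.exp (a * x) := by
    unfold stdGaussCDF
    refine setIntegral_mono_on pdf_integrable.integrableOn hint measurableSet_Iic ?_
    intro x _
    unfold stdGaussPDF
    rw [mul_assoc, ← Real.exp_add]
    refine mul_le_mul_of_nonneg_left (Real.exp_le_exp.mpr ?_) (by positivity)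
    nlinarith [sq_nonneg (x + a)]
  calc stdGaussCDF t ≤ _ := hmono
    _ = _ := by rw [MeasureTheory.integral_const_mul, integral_exp_mul_Iic' ha]

lemma cdf_hasDerivAt (t : ℝ) : HasDerivAt stdGaussCDF (stdGaussPDF t) t := by
  have heq : stdGaussCDF = fun x => stdGaussCDF 0 + ∫ y in (0:ℝ)..x, stdGaussPDF y := by
    funext x
    rw [← intervalIntegral.integral_Iic_sub_Iic pdf_integrable.integrableOn
      pdf_integrable.integrableOn]
    unfold stdGaussCDF
    ring
  rw [heq]
  exact (intervalIntegral.integral_hasDerivAt_right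
    (pdf_integrable.intervalIntegrable (a := 0) (b := t))
    (pdf_integrable.aestronglyMeasurable.stronglyMeasurableAtFilter (l := nhds t))
    (pdf_continuous.continuousAt (x := t))).const_add (stdGaussCDF 0)

lemma cdf_continuous : Continuous stdGaussCDF :=
  continuous_iff_continuousAt.mpr fun t => (cdf_hasDerivAt t).continuousAt

lemma cdf_tendsto_zero : Tendsto stdGaussCDF atBot (nhds 0) := by
  have h1 : Tendsto (fun t : ℝ => Real.exp ((1:ℝ) * t) / 1) atBot (nhds 0) := by
    simpa using Real.tendsto_exp_atBot
  have hub := h1.const_mul ((Real.sqrt (2 * Real.pi))⁻¹ * Real.exp ((1:ℝ) ^ 2 / 2))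
  rw [mul_zero] at hub
  exact tendsto_of_tendsto_of_tendsto_of_le_of_le tendsto_const_nhds hub
    (fun t => cdf_nonneg t) (fun t => cdf_le one_pos t)

lemma exp_pdf_shift (ρ x : ℝ) :
    Real.exp (-(ρ * x)) * stdGaussPDF (x - ρ) = Real.exp (-ρ ^ 2 / 2) * stdGaussPDF x := by
  unfold stdGaussPDF
  have e1 : Real.exp (-(ρ * x)) * Real.exp (-(x - ρ) ^ 2 / 2)
      = Real.exp (-ρ ^ 2 / 2) * Real.exp (-x ^ 2 / 2) := by
    rw [← Real.exp_add, ← Real.exp_add]; congr 1; ring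
  calc Real.exp (-(ρ * x)) * ((Real.sqrt (2 * Real.pi))⁻¹ * Real.exp (-(x - ρ) ^ 2 / 2))
      = (Real.exp (-(ρ * x)) * Real.exp (-(x - ρ) ^ 2 / 2)) * (Real.sqrt (2 * Real.pi))⁻¹ := by
        ring
    _ = (Real.exp (-ρ ^ 2 / 2) * Real.exp (-x ^ 2 / 2)) * (Real.sqrt (2 * Real.pi))⁻¹ := by
        rw [e1]
    _ = _ := by ring

/-- `∫_{−∞}^h e^{−h²/2 + x₀²/2 − ρh − ρx₀} Φ(x₀−ρ) φ(x₀) dx₀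
  = (φ(h+ρ)/ρ) Φ(h) − (φ(h) e^{−2hρ}/ρ) Φ(h−ρ)`. -/
theorem exp_cdf_integral (h ρ : ℝ) (hρ : 0 < ρ) :
    ∫ x₀ in Set.Iic h,
        Real.exp (-h ^ 2 / 2 + x₀ ^ 2 / 2 - ρ * h - ρ * x₀) *
          stdGaussCDF (x₀ - ρ) * stdGaussPDF x₀
      = stdGaussPDF (h + ρ) / ρ * stdGaussCDF h
        - stdGaussPDF h * Real.exp (-2 * h * ρ) / ρ * stdGaussCDF (h - ρ) := by
  set c : ℝ := (Real.sqrt (2 * Real.pi))⁻¹ with hc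
  set K : ℝ := c * Real.exp (-h ^ 2 / 2 - ρ * h) with hK
  set C : ℝ := c * Real.exp ((ρ + 1) ^ 2 / 2) * Real.exp (-((ρ + 1) * ρ)) / (ρ + 1) with hC
  have hCnn : 0 ≤ C := by rw [hC, hc]; positivity
  set g : ℝ → ℝ := fun x => K * (Real.exp (-(ρ * x)) * stdGaussCDF (x - ρ)) with hg
  set F : ℝ → ℝ := fun x => K * (Real.exp (-ρ ^ 2 / 2) / ρ * stdGaussCDF x
      - Real.exp (-(ρ * x)) / ρ * stdGaussCDF (x - ρ)) with hF
  -- pointwise identity of the integrand with g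
  have hfun : ∀ x : ℝ,
      Real.exp (-h ^ 2 / 2 + x ^ 2 / 2 - ρ * h - ρ * x) * stdGaussCDF (x - ρ) * stdGaussPDF x
        = g x := by
    intro x
    have e1 : Real.exp (-h ^ 2 / 2 + x ^ 2 / 2 - ρ * h - ρ * x) * Real.exp (-x ^ 2 / 2)
        = Real.exp (-h ^ 2 / 2 - ρ * h) * Real.exp (-(ρ * x)) := by
      rw [← Real.exp_add, ← Real.exp_add]; congr 1; ring
    simp only [hg, hK, stdGaussPDF, ← hc]
    calc Real.exp (-h ^ 2 / 2 + x ^ 2 / 2 - ρ * h - ρ * x) * stdGaussCDF (x - ρ)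
          * (c * Real.exp (-x ^ 2 / 2))
        = (Real.exp (-h ^ 2 / 2 + x ^ 2 / 2 - ρ * h - ρ * x) * Real.exp (-x ^ 2 / 2))
          * (c * stdGaussCDF (x - ρ)) := by ring
      _ = (Real.exp (-h ^ 2 / 2 - ρ * h) * Real.exp (-(ρ * x))) * (c * stdGaussCDF (x - ρ)) := by
          rw [e1]
      _ = _ := by ring
  -- uniform bound used for integrability and the limit at -∞
  have hbound : ∀ x : ℝ,
      Real.exp (-(ρ * x)) * stdGaussCDF (x - ρ) ≤ C * Real.exp (1 * x) := by
    intro x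
    have h1 := cdf_le (a := ρ + 1) (by linarith) (x - ρ)
    have h2 : Real.exp (-(ρ * x)) * stdGaussCDF (x - ρ)
        ≤ Real.exp (-(ρ * x)) * (c * Real.exp ((ρ + 1) ^ 2 / 2)
            * (Real.exp ((ρ + 1) * (x - ρ)) / (ρ + 1))) :=
      mul_le_mul_of_nonneg_left h1 (Real.exp_nonneg _)
    refine h2.trans_eq ?_
    have e1 : Real.exp (-(ρ * x)) * Real.exp ((ρ + 1) * (x - ρ))
        = Real.exp (-((ρ + 1) * ρ)) * Real.exp (1 * x) := by
      rw [← Real.exp_add, ← Real.exp_add]; congr 1; ring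
    calc Real.exp (-(ρ * x)) * (c * Real.exp ((ρ + 1) ^ 2 / 2)
            * (Real.exp ((ρ + 1) * (x - ρ)) / (ρ + 1)))
        = (Real.exp (-(ρ * x)) * Real.exp ((ρ + 1) * (x - ρ)))
            * (c * Real.exp ((ρ + 1) ^ 2 / 2) / (ρ + 1)) := by ring
      _ = (Real.exp (-((ρ + 1) * ρ)) * Real.exp (1 * x))
            * (c * Real.exp ((ρ + 1) ^ 2 / 2) / (ρ + 1)) := by rw [e1]
      _ = C * Real.exp (1 * x) := by rw [hC]; ring
  -- derivative of F is g
  have hder : ∀ x ∈ Iic h, HasDerivAt F (g x) x := by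
    intro x _
    have d1 : HasDerivAt (fun y => Real.exp (-ρ ^ 2 / 2) / ρ * stdGaussCDF y)
        (Real.exp (-ρ ^ 2 / 2) / ρ * stdGaussPDF x) x := (cdf_hasDerivAt x).const_mul _
    have dexp : HasDerivAt (fun y => Real.exp (-(ρ * y))) (Real.exp (-(ρ * x)) * (-ρ)) x := by
      have hlin : HasDerivAt (fun y : ℝ => -(ρ * y)) (-ρ) x := by
        have := ((hasDerivAt_id x).const_mul ρ).neg
        simp only [id, mul_one] at this
        exact this
      exact hlin.exp
    have dc2 : HasDerivAt (fun y => stdGaussCDF (y - ρ)) (stdGaussPDF (x - ρ)) x := by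
      have h1 : HasDerivAt (fun y : ℝ => y - ρ) 1 x := (hasDerivAt_id x).sub_const ρ
      have := (cdf_hasDerivAt (x - ρ)).comp x h1
      rw [mul_one] at this
      exact this
    have d2 := (dexp.div_const ρ).mul dc2
    have d := (d1.sub d2).const_mul K
    refine d.congr_deriv ?_
    have e2 := exp_pdf_shift ρ x
    have hρi : ρ * ρ⁻¹ = 1 := mul_inv_cancel₀ hρ.ne'
    show _ = K * (Real.exp (-(ρ * x)) * stdGaussCDF (x - ρ))
    linear_combination (-(K / ρ)) * e2 + (K * Real.exp (-(ρ * x)) * stdGaussCDF (x - ρ)) * hρi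
  -- integrability of g on Iic h
  have hint : IntegrableOn g (Iic h) := by
    have hexp : IntegrableOn (fun x => |K| * C * Real.exp (1 * x)) (Iic h) :=
      (integrableOn_exp_mul_Iic' one_pos).const_mul _
    refine MeasureTheory.Integrable.mono hexp ?_ ?_
    · exact ((continuous_const.mul ((Real.continuous_exp.comp (by fun_prop)).mul
        (cdf_continuous.comp (by fun_prop)))).aestronglyMeasurable).restrict
    · filter_upwards with x
      have h0 : 0 ≤ Real.exp (-(ρ * x)) * stdGaussCDF (x - ρ) :=
        mul_nonneg (Real.exp_nonneg _) (cdf_nonneg _)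
      simp only [hg]
      rw [norm_mul, Real.norm_eq_abs, Real.norm_eq_abs, Real.norm_eq_abs,
        abs_of_nonneg h0, abs_of_nonneg (show (0:ℝ) ≤ |K| * C * Real.exp (1 * x) by positivity)]
      calc |K| * (Real.exp (-(ρ * x)) * stdGaussCDF (x - ρ))
          ≤ |K| * (C * Real.exp (1 * x)) :=
            mul_le_mul_of_nonneg_left (hbound x) (abs_nonneg _)
        _ = |K| * C * Real.exp (1 * x) := by ring
  -- limit of F at -∞
  have htend : Tendsto F atBot (nhds 0) := by
    have tA : Tendsto (fun x => Real.exp (-ρ ^ 2 / 2) / ρ * stdGaussCDF x) atBot (nhds 0) := by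
      simpa using cdf_tendsto_zero.const_mul (Real.exp (-ρ ^ 2 / 2) / ρ)
    have tB : Tendsto (fun x => Real.exp (-(ρ * x)) / ρ * stdGaussCDF (x - ρ)) atBot (nhds 0) := by
      have tub : Tendsto (fun x : ℝ => C / ρ * Real.exp (1 * x)) atBot (nhds 0) := by
        have : Tendsto (fun x : ℝ => Real.exp (1 * x)) atBot (nhds 0) := by
          simpa using Real.tendsto_exp_atBot
        simpa using this.const_mul (C / ρ)
      refine tendsto_of_tendsto_of_tendsto_of_le_of_le tendsto_const_nhds tub ?_ ?_
      · intro x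
        exact mul_nonneg (div_nonneg (Real.exp_nonneg _) hρ.le) (cdf_nonneg _)
      · intro x
        calc Real.exp (-(ρ * x)) / ρ * stdGaussCDF (x - ρ)
            = (Real.exp (-(ρ * x)) * stdGaussCDF (x - ρ)) / ρ := by ring
          _ ≤ (C * Real.exp (1 * x)) / ρ := (div_le_div_iff_of_pos_right hρ).mpr (hbound x)
          _ = C / ρ * Real.exp (1 * x) := by ring
    have := (tA.sub tB).const_mul K
    simpa using this
  have key := integral_Iic_of_hasDerivAt_of_tendsto' hder hint htend
  calc ∫ x₀ in Set.Iic h,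
        Real.exp (-h ^ 2 / 2 + x₀ ^ 2 / 2 - ρ * h - ρ * x₀) *
          stdGaussCDF (x₀ - ρ) * stdGaussPDF x₀
      = ∫ x₀ in Set.Iic h, g x₀ := by
        refine integral_congr_ae (Filter.Eventually.of_forall fun x => hfun x)
    _ = F h - 0 := key
    _ = _ := by
        have eA : Real.exp (-h ^ 2 / 2 - ρ * h) * Real.exp (-ρ ^ 2 / 2)
            = Real.exp (-(h + ρ) ^ 2 / 2) := by
          rw [← Real.exp_add]; congr 1; ring
        have eB : Real.exp (-h ^ 2 / 2 - ρ * h) * Real.exp (-(ρ * h))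
            = Real.exp (-h ^ 2 / 2) * Real.exp (-2 * h * ρ) := by
          rw [← Real.exp_add, ← Real.exp_add]; congr 1; ring
        simp only [hF, hK, stdGaussPDF, ← hc, sub_zero]
        calc c * Real.exp (-h ^ 2 / 2 - ρ * h) * (Real.exp (-ρ ^ 2 / 2) / ρ * stdGaussCDF h
              - Real.exp (-(ρ * h)) / ρ * stdGaussCDF (h - ρ))
            = (Real.exp (-h ^ 2 / 2 - ρ * h) * Real.exp (-ρ ^ 2 / 2)) * (c / ρ * stdGaussCDF h)
              - (Real.exp (-h ^ 2 / 2 - ρ * h) * Real.exp (-(ρ * h)))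
                * (c / ρ * stdGaussCDF (h - ρ)) := by ring
          _ = Real.exp (-(h + ρ) ^ 2 / 2) * (c / ρ * stdGaussCDF h)
              - Real.exp (-h ^ 2 / 2) * Real.exp (-2 * h * ρ)
                * (c / ρ * stdGaussCDF (h - ρ)) := by rw [eA, eB]
          _ = _ := by ring
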